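/- Let F_X be an L×K fitting pattern and B an L×K X-pattern over a field 𝔽. Let G be an r×K matrix, D an L×r matrix, and C an r×r matrix with C² = I. Assume that DG fits F_X and that DCG fits B. Then the 2L×r matrix D' obtained by stacking D on top of DC satisfies: D'·(G | CG) fits the 2L×2K block pattern (F_X B; B F_X); in particular, (G | CG) is a scalar linear index code of length r for the problem of the pattern (F_X B; B F_X). Moreover, if r = minrk(F_X), then minrk((F_X B; B F_X)) = minrk(F_X), i.e., the extension is rank-invariant. -/

import Mathlib

open Matrix

/-- A pattern entry: `some false` = 0, `some true` = 1, `none` = X. -/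
abbrev PatEntry := Option Bool

/-- A matrix `M` fits a pattern `P` if `M` is `0` at every `0`-entry of `P`
and `1` at every `1`-entry of `P` (X-entries are unconstrained). -/
def Fits {L K 𝔽 : Type*} [Zero 𝔽] [One 𝔽]
    (P : Matrix L K PatEntry) (M : Matrix L K 𝔽) : Prop :=
  ∀ i j, (P i j = some false → M i j = 0) ∧ (P i j = some true → M i j = 1)

/-- A pattern is an X-pattern if it has no `1`-entries. -/
def IsXPat {L K : Type*} (P : Matrix L K PatEntry) : Prop :=
  ∀ i j, P i j ≠ some true

/-- The minrank of a pattern over the field `𝔽`. -/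
noncomputable def minrk (𝔽 : Type*) [Field 𝔽] {L K : Type*} [Fintype K]
    (P : Matrix L K PatEntry) : ℕ :=
  sInf {n | ∃ M : Matrix L K 𝔽, Fits P M ∧ M.rank = n}

lemma fits_fromBlocks {L K 𝔽 : Type*} [Zero 𝔽] [One 𝔽]
    {P₁₁ P₁₂ P₂₁ P₂₂ : Matrix L K PatEntry}
    {A₁₁ A₁₂ A₂₁ A₂₂ : Matrix L K 𝔽}
    (h₁₁ : Fits P₁₁ A₁₁) (h₁₂ : Fits P₁₂ A₁₂)
    (h₂₁ : Fits P₂₁ A₂₁) (h₂₂ : Fits P₂₂ A₂₂) :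
    Fits (Matrix.fromBlocks P₁₁ P₁₂ P₂₁ P₂₂) (Matrix.fromBlocks A₁₁ A₁₂ A₂₁ A₂₂) := by
  rintro (i | i) (j | j)
  · exact h₁₁ i j
  · exact h₁₂ i j
  · exact h₂₁ i j
  · exact h₂₂ i j

lemma fits_subLL {L K 𝔽 : Type*} [Zero 𝔽] [One 𝔽]
    {FX B : Matrix L K PatEntry} {M : Matrix (L ⊕ L) (K ⊕ K) 𝔽}
    (h : Fits (Matrix.fromBlocks FX B B FX) M) :
    Fits FX (M.submatrix Sum.inl Sum.inl) := fun i j => h (Sum.inl i) (Sum.inl j)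

lemma rank_subLL {L K : ℕ} {𝔽 : Type*} [Field 𝔽]
    (M : Matrix (Fin L ⊕ Fin L) (Fin K ⊕ Fin K) 𝔽) :
    (M.submatrix (Sum.inl : Fin L → Fin L ⊕ Fin L)
      (Sum.inl : Fin K → Fin K ⊕ Fin K)).rank ≤ M.rank := by
  have h : M.submatrix (Sum.inl : Fin L → Fin L ⊕ Fin L)
      (Sum.inl : Fin K → Fin K ⊕ Fin K)
      = Matrix.fromCols (1 : Matrix (Fin L) (Fin L) 𝔽) (0 : Matrix (Fin L) (Fin L) 𝔽) * M *
        Matrix.fromRows (1 : Matrix (Fin K) (Fin K) 𝔽) (0 : Matrix (Fin K) (Fin K) 𝔽) := by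
    ext i j
    simp [Matrix.mul_apply, Matrix.fromCols,
      Fintype.sum_sum_type, Matrix.one_apply, Finset.sum_mul, ite_and,
      Matrix.fromRows_apply_inl, Matrix.fromRows_apply_inr]
  rw [h]
  exact le_trans (Matrix.rank_mul_le_left _ _) (Matrix.rank_mul_le_right _ _)

theorem two_order_extension_of_involutory {L K r : ℕ} (𝔽 : Type*) [Field 𝔽]
    (FX B : Matrix (Fin L) (Fin K) PatEntry) (hXpat : IsXPat B)
    (G : Matrix (Fin r) (Fin K) 𝔽) (D : Matrix (Fin L) (Fin r) 𝔽)
    (C : Matrix (Fin r) (Fin r) 𝔽) (hC : C * C = 1)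
    (hDG : Fits FX (D * G)) (hDCG : Fits B (D * C * G)) :
    Fits (Matrix.fromBlocks FX B B FX)
      (Matrix.fromRows D (D * C) * Matrix.fromCols G (C * G)) ∧
    (∃ D' : Matrix (Fin L ⊕ Fin L) (Fin r) 𝔽,
        Fits (Matrix.fromBlocks FX B B FX) (D' * Matrix.fromCols G (C * G))) ∧
    (r = minrk 𝔽 FX →
        minrk 𝔽 (Matrix.fromBlocks FX B B FX) = minrk 𝔽 FX) := by
  have hprod : Matrix.fromRows D (D * C) * Matrix.fromCols G (C * G)
      = Matrix.fromBlocks (D * G) (D * C * G) (D * C * G) (D * G) := by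
    rw [Matrix.fromRows_mul_fromCols, Matrix.mul_assoc D C (C * G),
      ← Matrix.mul_assoc C C G, hC, Matrix.one_mul, ← Matrix.mul_assoc D C G]
  have hfits : Fits (Matrix.fromBlocks FX B B FX)
      (Matrix.fromRows D (D * C) * Matrix.fromCols G (C * G)) := by
    rw [hprod]
    exact fits_fromBlocks hDG hDCG hDCG hDG
  refine ⟨hfits, ⟨Matrix.fromRows D (D * C), hfits⟩, ?_⟩
  intro hr
  set M₀ := Matrix.fromRows D (D * C) * Matrix.fromCols G (C * G) with hM₀
  have hrank : M₀.rank ≤ r := by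
    refine le_trans (Matrix.rank_mul_le_right _ _) ?_
    simpa using Matrix.rank_le_card_height (Matrix.fromCols G (C * G))
  have hle : minrk 𝔽 (Matrix.fromBlocks FX B B FX) ≤ r := by
    refine le_trans (Nat.sInf_le ⟨M₀, hfits, rfl⟩) hrank
  have hge : minrk 𝔽 FX ≤ minrk 𝔽 (Matrix.fromBlocks FX B B FX) := by
    refine le_csInf ⟨M₀.rank, M₀, hfits, rfl⟩ ?_
    rintro n ⟨M, hM, rfl⟩
    exact le_trans (Nat.sInf_le ⟨M.submatrix Sum.inl Sum.inl, fits_subLL hM, rfl⟩)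
      (rank_subLL M)
  omega
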